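/- If Q is symmetric positive definite and H is an arbitrary square matrix, then the Lyapunov equation W Q + Q W = H + Hᵀ has a unique symmetric solution W. -/

import Mathlib

open Matrix

private lemma lyap_inj (n : ℕ) (Q : Matrix (Fin n) (Fin n) ℝ) (hQ : Q.PosDef)
    (W : Matrix (Fin n) (Fin n) ℝ) (h : W * Q + Q * W = 0) : W = 0 := by
  classical
  have htr : trace (Wᵀ * (W * Q)) + trace (Wᵀ * (Q * W)) = 0 := by
    rw [← trace_add, ← mul_add, h, mul_zero, trace_zero]
  have h1 : trace (Wᵀ * (Q * W)) = ∑ j, (fun i => W i j) ⬝ᵥ Q *ᵥ (fun i => W i j) := by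
    simp [trace, diag, mul_apply, dotProduct, mulVec, Finset.mul_sum, Finset.sum_mul]
  have h2 : trace (Wᵀ * (W * Q)) = ∑ i, (fun j => W i j) ⬝ᵥ Q *ᵥ (fun j => W i j) := by
    rw [trace_mul_comm]
    simp only [trace, diag, mul_apply, dotProduct, mulVec, transpose_apply,
      Finset.mul_sum, Finset.sum_mul]
    refine Finset.sum_congr rfl fun i _ => ?_
    rw [Finset.sum_comm]
    refine Finset.sum_congr rfl fun a _ => Finset.sum_congr rfl fun b _ => ?_
    ring
  have hA : ∀ i, (0:ℝ) ≤ (fun j => W i j) ⬝ᵥ Q *ᵥ (fun j => W i j) := fun i => by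
    simpa using hQ.posSemidef.dotProduct_mulVec_nonneg (fun j => W i j)
  have hB : ∀ j, (0:ℝ) ≤ (fun i => W i j) ⬝ᵥ Q *ᵥ (fun i => W i j) := fun j => by
    simpa using hQ.posSemidef.dotProduct_mulVec_nonneg (fun i => W i j)
  rw [h1, h2] at htr
  have hAz : ∑ i, (fun j => W i j) ⬝ᵥ Q *ᵥ (fun j => W i j) = 0 := by
    have hB' : (0:ℝ) ≤ ∑ j, (fun i => W i j) ⬝ᵥ Q *ᵥ (fun i => W i j) :=
      Finset.sum_nonneg fun j _ => hB j
    have hA' : (0:ℝ) ≤ ∑ i, (fun j => W i j) ⬝ᵥ Q *ᵥ (fun j => W i j) :=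
      Finset.sum_nonneg fun i _ => hA i
    linarith
  ext i j
  have hrow : (fun j => W i j) = 0 := by
    by_contra hne
    have hpos := hQ.dotProduct_mulVec_pos (x := fun j => W i j) hne
    have hterm := (Finset.sum_eq_zero_iff_of_nonneg (fun i _ => hA i)).mp hAz i (Finset.mem_univ i)
    simp only [star_trivial] at hpos
    linarith
  simpa using congrFun hrow j

theorem stmt_18 (n : ℕ) (Q H : Matrix (Fin n) (Fin n) ℝ)
    (hQs : Q.IsSymm) (hQ : Q.PosDef) :
    (∃! W : Matrix (Fin n) (Fin n) ℝ, W * Q + Q * W = H + Hᵀ) ∧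
    (∀ W : Matrix (Fin n) (Fin n) ℝ, W * Q + Q * W = H + Hᵀ → W.IsSymm) := by
  classical
  set L : Matrix (Fin n) (Fin n) ℝ →ₗ[ℝ] Matrix (Fin n) (Fin n) ℝ :=
    { toFun := fun W => W * Q + Q * W
      map_add' := fun A B => by noncomm_ring
      map_smul' := fun c A => by simp [Matrix.smul_mul, Matrix.mul_smul, smul_add] } with hL
  have hLapp : ∀ W, L W = W * Q + Q * W := fun W => rfl
  have hinj : Function.Injective L := by
    rw [← LinearMap.ker_eq_bot, LinearMap.ker_eq_bot']
    intro W hW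
    exact lyap_inj n Q hQ W hW
  have hsurj : Function.Surjective L := LinearMap.injective_iff_surjective.mp hinj
  obtain ⟨W0, hW0'⟩ := hsurj (H + Hᵀ)
  have hW0 : W0 * Q + Q * W0 = H + Hᵀ := by rw [← hLapp]; exact hW0'
  have huniq : ∀ W, W * Q + Q * W = H + Hᵀ → W = W0 := by
    intro W hW
    exact hinj (by rw [hLapp, hLapp, hW, hW0])
  refine ⟨⟨W0, hW0, huniq⟩, fun W hW => ?_⟩
  have hWt : Wᵀ * Q + Q * Wᵀ = H + Hᵀ := by
    have := congrArg Matrix.transpose hW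
    rw [transpose_add, transpose_mul, transpose_mul, transpose_add, transpose_transpose,
      hQs.eq] at this
    rw [add_comm] at this
    rw [this, add_comm]
  have : Wᵀ = W := (huniq _ hWt).trans (huniq _ hW).symm
  exact this
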